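/- (Characterization of global minimizers of the DIET latent objective.) Under the cluster-centric DGP, a triple (h, W, β), with h: S^{d-1} → R^d continuous, W a classification head with rows w_i^T for i ∈ I, and β > 0, globally minimizes the latent DIET objective L_z(h, W, β) = E_{(z,I)}[ −ln( exp(β⟨w_I, h(z)⟩) / Σ_{j∈I} exp(β⟨w_j, h(z)⟩) ) ] if and only if β⟨w_i − w_k, h(z)⟩ = κ⟨v_{𝒞(i)} − v_{𝒞(k)}, z⟩ holds for all i, k ∈ I and all z ∈ S^{d-1}. -/

import Mathlib

open MeasureTheory Metric
open scoped RealInnerProductSpace BigOperators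

/-- The uniform (surface) measure on the unit sphere of `ℝ^d`, obtained from the
Lebesgue measure on `EuclideanSpace ℝ (Fin d)`. -/
noncomputable def sphereUniform (d : ℕ) :
    Measure (Metric.sphere (0 : EuclideanSpace ℝ (Fin d)) 1) :=
  (volume : Measure (EuclideanSpace ℝ (Fin d))).toSphere

/-- A finite system of vectors is an *affine generator system* of `ℝ^d` if every vector
is a linear combination of the system with coefficients summing to `1`. -/
def IsAffineGenerator {d : ℕ} {ι : Type} [Fintype ι]
    (v : ι → EuclideanSpace ℝ (Fin d)) : Prop :=
  ∀ x : EuclideanSpace ℝ (Fin d), ∃ α : ι → ℝ,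
    (∑ c, α c = 1) ∧ x = ∑ c, α c • v c

/-- The latent DIET objective
`L_z(h, W, β) = E_{(z,I)}[ −ln( exp(β⟨w_I, h z⟩) / Σ_j exp(β⟨w_j, h z⟩) ) ]`,
where the instance label is uniform on `Idx` and, conditionally on the label `i`, the
latent `z` is distributed on the unit sphere according to the von Mises–Fisher density
proportional to `exp (κ ⟪v (Cl i), z⟫)` with respect to the uniform (surface) measure. -/
noncomputable def dietLossZ (d : ℕ) {Cset Idx : Type} [Fintype Idx]
    (v : Cset → EuclideanSpace ℝ (Fin d)) (κ : ℝ) (Cl : Idx → Cset)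
    (h : Metric.sphere (0 : EuclideanSpace ℝ (Fin d)) 1 → EuclideanSpace ℝ (Fin d))
    (w : Idx → EuclideanSpace ℝ (Fin d)) (β : ℝ) : ℝ :=
  (Fintype.card Idx : ℝ)⁻¹ * ∑ i : Idx,
    ((∫ z : Metric.sphere (0 : EuclideanSpace ℝ (Fin d)) 1,
        Real.exp (κ * ⟪v (Cl i), (z : EuclideanSpace ℝ (Fin d))⟫)
        ∂(sphereUniform d))⁻¹ *
      ∫ z : Metric.sphere (0 : EuclideanSpace ℝ (Fin d)) 1,
        Real.exp (κ * ⟪v (Cl i), (z : EuclideanSpace ℝ (Fin d))⟫) *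
          (- Real.log (Real.exp (β * ⟪w i, h z⟫) /
            ∑ j : Idx, Real.exp (β * ⟪w j, h z⟫)))
        ∂(sphereUniform d))

instance (d : ℕ) : IsFiniteMeasure (sphereUniform d) := by
  unfold sphereUniform; infer_instance

section MeasureAux

open Set
open scoped Pointwise

/-- Restriction of a linear isometry equivalence to the unit sphere, as a homeomorphism. -/
noncomputable def sphereHomeo {d : ℕ} (f : EuclideanSpace ℝ (Fin d) ≃ₗᵢ[ℝ] EuclideanSpace ℝ (Fin d)) :
    (Metric.sphere (0 : EuclideanSpace ℝ (Fin d)) 1) ≃ₜ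
      (Metric.sphere (0 : EuclideanSpace ℝ (Fin d)) 1) where
  toFun z := ⟨f z, by
    rw [mem_sphere_zero_iff_norm, f.norm_map, ← mem_sphere_zero_iff_norm]; exact z.2⟩
  invFun z := ⟨f.symm z, by
    rw [mem_sphere_zero_iff_norm, f.symm.norm_map, ← mem_sphere_zero_iff_norm]; exact z.2⟩
  left_inv z := Subtype.ext (f.symm_apply_apply z)
  right_inv z := Subtype.ext (f.apply_symm_apply z)
  continuous_toFun := by
    apply Continuous.subtype_mk
    exact f.continuous.comp continuous_subtype_val
  continuous_invFun := by
    apply Continuous.subtype_mk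
    exact f.symm.continuous.comp continuous_subtype_val

lemma image_symm_eq_preimage {d : ℕ} (f : EuclideanSpace ℝ (Fin d) ≃ₗᵢ[ℝ] EuclideanSpace ℝ (Fin d))
    (B : Set (EuclideanSpace ℝ (Fin d))) : f.symm '' B = ⇑f ⁻¹' B := by
  ext x
  constructor
  · rintro ⟨y, hy, rfl⟩; simpa using hy
  · intro hx; exact ⟨f x, hx, f.symm_apply_apply x⟩

lemma volume_image_symm {d : ℕ} (f : EuclideanSpace ℝ (Fin d) ≃ₗᵢ[ℝ] EuclideanSpace ℝ (Fin d))
    (B : Set (EuclideanSpace ℝ (Fin d))) : volume (f.symm '' B) = volume B := by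
  rw [image_symm_eq_preimage]
  have e : EuclideanSpace ℝ (Fin d) ≃ᵐ EuclideanSpace ℝ (Fin d) :=
    f.toHomeomorph.toMeasurableEquiv
  have h1 : ⇑f ⁻¹' B = ⇑(f.toHomeomorph.toMeasurableEquiv) ⁻¹' B := rfl
  rw [h1, ← MeasurableEquiv.map_apply]
  have h2 : (volume.map ⇑(f.toHomeomorph.toMeasurableEquiv)) = volume := by
    have := f.measurePreserving.map_eq
    convert this using 2 <;> rfl
  rw [h2]

lemma measurePreserving_sphereHomeo {d : ℕ}
    (f : EuclideanSpace ℝ (Fin d) ≃ₗᵢ[ℝ] EuclideanSpace ℝ (Fin d)) :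
    MeasurePreserving (sphereHomeo f) (sphereUniform d) (sphereUniform d) := by
  refine ⟨(sphereHomeo f).continuous.measurable, ?_⟩
  refine Measure.ext fun s hs => ?_
  rw [Measure.map_apply (sphereHomeo f).continuous.measurable hs]
  unfold sphereUniform
  rw [Measure.toSphere_apply' _ (hs.preimage (sphereHomeo f).continuous.measurable),
    Measure.toSphere_apply' _ hs]
  congr 1
  have hset : (Subtype.val '' ((sphereHomeo f) ⁻¹' s)) = f.symm '' (Subtype.val '' s) := by
    ext x
    constructor
    · rintro ⟨z, hz, rfl⟩
      exact ⟨f z, ⟨(sphereHomeo f) z, hz, rfl⟩, f.symm_apply_apply _⟩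
    · rintro ⟨y, ⟨zz, hzz, rfl⟩, rfl⟩
      refine ⟨(sphereHomeo f).symm zz, ?_, rfl⟩
      show (sphereHomeo f) ((sphereHomeo f).symm zz) ∈ s
      rw [Homeomorph.apply_symm_apply]; exact hzz
  rw [hset]
  have hsmul : (Ioo (0:ℝ) 1 • (f.symm '' (Subtype.val '' s)))
      = f.symm '' (Ioo (0:ℝ) 1 • (Subtype.val '' s)) := by
    ext x
    simp only [Set.mem_smul, Set.mem_image]
    constructor
    · rintro ⟨r, hr, y, ⟨b, hb, rfl⟩, rfl⟩
      exact ⟨r • b, ⟨r, hr, b, hb, rfl⟩, f.symm.map_smul r b⟩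
    · rintro ⟨y, ⟨r, hr, b, hb, rfl⟩, rfl⟩
      exact ⟨r, hr, f.symm b, ⟨b, hb, rfl⟩, (f.symm.map_smul r b).symm⟩
  rw [hsmul, volume_image_symm]

lemma sphereUniform_isOpenPosMeasure (d : ℕ)
    [Nonempty (Metric.sphere (0 : EuclideanSpace ℝ (Fin d)) 1)] :
    (sphereUniform d).IsOpenPosMeasure := by
  constructor
  intro U hU hUne
  have hnt : Nontrivial (EuclideanSpace ℝ (Fin d)) := by
    obtain ⟨z⟩ := (inferInstance : Nonempty (Metric.sphere (0 : EuclideanSpace ℝ (Fin d)) 1))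
    refine ⟨z.1, 0, ?_⟩
    have := mem_sphere_zero_iff_norm.1 z.2
    intro h; rw [h] at this; simp at this
  unfold sphereUniform
  rw [Measure.toSphere_apply' _ hU.measurableSet]
  refine mul_ne_zero ?_ ?_
  · simp only [ne_eq, Nat.cast_eq_zero]
    exact Module.finrank_pos.ne'
  · rw [← Measure.toSphere_apply_aux volume U ⟨1, mem_Ioi.2 one_pos⟩]
    set W : Set (EuclideanSpace ℝ (Fin d)) :=
      Subtype.val '' (homeomorphUnitSphereProd (EuclideanSpace ℝ (Fin d)) ⁻¹' U ×ˢ Iio ⟨1, mem_Ioi.2 one_pos⟩)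
    have hWopen : IsOpen W := by
      apply (isOpen_compl_singleton).isOpenMap_subtype_val
      apply (homeomorphUnitSphereProd (EuclideanSpace ℝ (Fin d))).continuous.isOpen_preimage
      apply hU.prod
      have : (Iio (⟨1, mem_Ioi.2 one_pos⟩ : Ioi (0:ℝ))) = Subtype.val ⁻¹' Iio 1 := rfl
      rw [this]
      exact isOpen_Iio.preimage continuous_subtype_val
    have hWne : W.Nonempty := by
      obtain ⟨z₀, hz₀⟩ := hUne
      refine ⟨_, ⟨(homeomorphUnitSphereProd (EuclideanSpace ℝ (Fin d))).symm
        (z₀, ⟨(1:ℝ)/2, by norm_num⟩), ?_, rfl⟩⟩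
      rw [Set.mem_preimage, Homeomorph.apply_symm_apply]
      exact ⟨hz₀, by rw [Set.mem_Iio]; exact Subtype.mk_lt_mk.2 (by norm_num)⟩
    exact (hWopen.measure_ne_zero volume hWne)


lemma gibbs_term_le {a q A : ℝ} (ha : 0 < a) (hq : 0 < q) (hA : 0 < A) :
    a * (-Real.log (a / A)) - a * (-Real.log q) ≤ q * A - a := by
  have hx : 0 < q * A / a := by positivity
  have h1 : -Real.log (a / A) - -Real.log q = Real.log (q * A / a) := by
    rw [Real.log_div (by positivity) ha.ne', Real.log_div ha.ne' hA.ne',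
      Real.log_mul hq.ne' hA.ne']
    ring
  calc a * (-Real.log (a / A)) - a * (-Real.log q)
      = a * Real.log (q * A / a) := by rw [← mul_sub, h1]
    _ ≤ a * (q * A / a - 1) := by
        exact mul_le_mul_of_nonneg_left (Real.log_le_sub_one_of_pos hx) ha.le
    _ = q * A - a := by field_simp

lemma gibbs_term_lt {a q A : ℝ} (ha : 0 < a) (hq : 0 < q) (hA : 0 < A) (hne : q ≠ a / A) :
    a * (-Real.log (a / A)) - a * (-Real.log q) < q * A - a := by
  have hx : 0 < q * A / a := by positivity
  have hx1 : q * A / a ≠ 1 := by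
    intro hcon
    apply hne
    field_simp at hcon
    rw [← hcon]
    field_simp
  have h1 : -Real.log (a / A) - -Real.log q = Real.log (q * A / a) := by
    rw [Real.log_div (by positivity) ha.ne', Real.log_div ha.ne' hA.ne',
      Real.log_mul hq.ne' hA.ne']
    ring
  calc a * (-Real.log (a / A)) - a * (-Real.log q)
      = a * Real.log (q * A / a) := by rw [← mul_sub, h1]
    _ < a * (q * A / a - 1) := by
        exact mul_lt_mul_of_pos_left (Real.log_lt_sub_one_of_pos hx hx1) ha
    _ = q * A - a := by field_simp

lemma gibbs_le {ι : Type} [Fintype ι] (a q : ι → ℝ) (ha : ∀ i, 0 < a i) (hq : ∀ i, 0 < q i)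
    (hq1 : ∑ j, q j = 1) :
    ∑ i, a i * (-Real.log (a i / ∑ j, a j)) ≤ ∑ i, a i * (-Real.log (q i)) := by
  rcases isEmpty_or_nonempty ι with hι | hι
  · simp at hq1
  have hA : 0 < ∑ j, a j := Finset.sum_pos (fun j _ => ha j) Finset.univ_nonempty
  have key := Finset.sum_le_sum (fun i (_ : i ∈ Finset.univ) => gibbs_term_le (ha i) (hq i) hA)
  rw [Finset.sum_sub_distrib, Finset.sum_sub_distrib, ← Finset.sum_mul, hq1, one_mul] at key
  linarith

lemma gibbs_eq {ι : Type} [Fintype ι] (a q : ι → ℝ) (ha : ∀ i, 0 < a i) (hq : ∀ i, 0 < q i)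
    (hq1 : ∑ j, q j = 1)
    (heq : ∑ i, a i * (-Real.log (a i / ∑ j, a j)) = ∑ i, a i * (-Real.log (q i))) :
    ∀ i, q i = a i / ∑ j, a j := by
  rcases isEmpty_or_nonempty ι with hι | hι
  · simp at hq1
  have hA : 0 < ∑ j, a j := Finset.sum_pos (fun j _ => ha j) Finset.univ_nonempty
  by_contra hcon
  push_neg at hcon
  obtain ⟨i₀, hi₀⟩ := hcon
  have key := Finset.sum_lt_sum
    (fun i (_ : i ∈ Finset.univ) => gibbs_term_le (ha i) (hq i) hA)
    ⟨i₀, Finset.mem_univ _, gibbs_term_lt (ha i₀) (hq i₀) hA hi₀⟩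
  rw [Finset.sum_sub_distrib, Finset.sum_sub_distrib, ← Finset.sum_mul, hq1, one_mul] at key
  linarith

end MeasureAux

section Aux

instance (d : ℕ) : IsFiniteMeasure (sphereUniform d) := by
  unfold sphereUniform; infer_instance

variable {d : ℕ}

/-- Continuous functions on the (compact) sphere are integrable. -/
lemma Continuous.integrable_sphere
    {g : Metric.sphere (0 : EuclideanSpace ℝ (Fin d)) 1 → ℝ} (hg : Continuous g) :
    Integrable g (sphereUniform d) :=
  hg.integrable_of_hasCompactSupport (IsClosed.isCompact (isClosed_tsupport g))

lemma continuous_exp_inner (κ : ℝ) (v : EuclideanSpace ℝ (Fin d)) :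
    Continuous (fun z : Metric.sphere (0 : EuclideanSpace ℝ (Fin d)) 1 =>
      Real.exp (κ * ⟪v, (z : EuclideanSpace ℝ (Fin d))⟫)) :=
  Real.continuous_exp.comp (continuous_const.mul
    (Continuous.inner continuous_const continuous_subtype_val))

lemma integral_exp_inner_congr {d : ℕ} (κ : ℝ) (v v' : EuclideanSpace ℝ (Fin d))
    (hv : ‖v‖ = 1) (hv' : ‖v'‖ = 1) :
    ∫ z : Metric.sphere (0 : EuclideanSpace ℝ (Fin d)) 1,
        Real.exp (κ * ⟪v, (z : EuclideanSpace ℝ (Fin d))⟫) ∂(sphereUniform d)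
    = ∫ z : Metric.sphere (0 : EuclideanSpace ℝ (Fin d)) 1,
        Real.exp (κ * ⟪v', (z : EuclideanSpace ℝ (Fin d))⟫) ∂(sphereUniform d) := by
  set f : EuclideanSpace ℝ (Fin d) ≃ₗᵢ[ℝ] EuclideanSpace ℝ (Fin d) :=
    Submodule.reflection (ℝ ∙ (v' - v))ᗮ with hf
  have hfv : f v' = v := Submodule.reflection_sub (by rw [hv', hv])
  have hint := (measurePreserving_sphereHomeo f).integral_comp
    ((sphereHomeo f).measurableEmbedding)
    (fun z : Metric.sphere (0 : EuclideanSpace ℝ (Fin d)) 1 =>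
      Real.exp (κ * ⟪v, (z : EuclideanSpace ℝ (Fin d))⟫))
  rw [← hint]
  congr 1
  funext z
  congr 2
  have : ((sphereHomeo f z : Metric.sphere (0 : EuclideanSpace ℝ (Fin d)) 1) :
      EuclideanSpace ℝ (Fin d)) = f z := rfl
  rw [this, ← hfv, LinearIsometryEquiv.inner_map_map]

lemma integral_exp_inner_pos {d : ℕ}
    [Nonempty (Metric.sphere (0 : EuclideanSpace ℝ (Fin d)) 1)]
    (κ : ℝ) (v : EuclideanSpace ℝ (Fin d)) :
    0 < ∫ z : Metric.sphere (0 : EuclideanSpace ℝ (Fin d)) 1,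
        Real.exp (κ * ⟪v, (z : EuclideanSpace ℝ (Fin d))⟫) ∂(sphereUniform d) := by
  haveI := sphereUniform_isOpenPosMeasure d
  rw [integral_pos_iff_support_of_nonneg (fun z => (Real.exp_pos _).le)
    (continuous_exp_inner κ v).integrable_sphere]
  have hsupp : Function.support (fun z : Metric.sphere (0 : EuclideanSpace ℝ (Fin d)) 1 =>
      Real.exp (κ * ⟪v, (z : EuclideanSpace ℝ (Fin d))⟫)) = Set.univ := by
    ext z; simp [Function.mem_support, (Real.exp_pos _).ne']
  rw [hsupp]
  exact isOpen_univ.measure_pos _ Set.univ_nonempty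

variable {Cset Idx : Type} [Fintype Idx] [Nonempty Idx]
  (v : Cset → EuclideanSpace ℝ (Fin d)) (κ : ℝ) (Cl : Idx → Cset)

/-- The pointwise cross-entropy integrand for parameters `(h', w', β')`. -/
noncomputable def ceIntegrand
    (h' : Metric.sphere (0 : EuclideanSpace ℝ (Fin d)) 1 → EuclideanSpace ℝ (Fin d))
    (w' : Idx → EuclideanSpace ℝ (Fin d)) (β' : ℝ)
    (z : Metric.sphere (0 : EuclideanSpace ℝ (Fin d)) 1) : ℝ :=
  ∑ i : Idx, Real.exp (κ * ⟪v (Cl i), (z : EuclideanSpace ℝ (Fin d))⟫) *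
    (- Real.log (Real.exp (β' * ⟪w' i, h' z⟫) / ∑ j : Idx, Real.exp (β' * ⟪w' j, h' z⟫)))

/-- The pointwise entropy integrand (cross entropy of the posterior with itself). -/
noncomputable def entIntegrand (z : Metric.sphere (0 : EuclideanSpace ℝ (Fin d)) 1) : ℝ :=
  ∑ i : Idx, Real.exp (κ * ⟪v (Cl i), (z : EuclideanSpace ℝ (Fin d))⟫) *
    (- Real.log (Real.exp (κ * ⟪v (Cl i), (z : EuclideanSpace ℝ (Fin d))⟫) /
      ∑ j : Idx, Real.exp (κ * ⟪v (Cl j), (z : EuclideanSpace ℝ (Fin d))⟫)))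

lemma continuous_ceTerm
    {h' : Metric.sphere (0 : EuclideanSpace ℝ (Fin d)) 1 → EuclideanSpace ℝ (Fin d)}
    {w' : Idx → EuclideanSpace ℝ (Fin d)} {β' : ℝ} (hh' : Continuous h') (i : Idx) :
    Continuous (fun z : Metric.sphere (0 : EuclideanSpace ℝ (Fin d)) 1 =>
      Real.exp (κ * ⟪v (Cl i), (z : EuclideanSpace ℝ (Fin d))⟫) *
        (- Real.log (Real.exp (β' * ⟪w' i, h' z⟫) /
          ∑ j : Idx, Real.exp (β' * ⟪w' j, h' z⟫)))) := by
  have hnum : ∀ j : Idx, Continuous (fun z : Metric.sphere (0 : EuclideanSpace ℝ (Fin d)) 1 =>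
      Real.exp (β' * ⟪w' j, h' z⟫)) := fun j =>
    Real.continuous_exp.comp (continuous_const.mul (Continuous.inner continuous_const hh'))
  have hden : Continuous (fun z : Metric.sphere (0 : EuclideanSpace ℝ (Fin d)) 1 =>
      ∑ j : Idx, Real.exp (β' * ⟪w' j, h' z⟫)) := continuous_finset_sum _ fun j _ => hnum j
  have hdenpos : ∀ z : Metric.sphere (0 : EuclideanSpace ℝ (Fin d)) 1,
      0 < ∑ j : Idx, Real.exp (β' * ⟪w' j, h' z⟫) := fun z =>
    Finset.sum_pos (fun j _ => Real.exp_pos _) Finset.univ_nonempty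
  have hfrac : Continuous (fun z : Metric.sphere (0 : EuclideanSpace ℝ (Fin d)) 1 =>
      Real.exp (β' * ⟪w' i, h' z⟫) / ∑ j : Idx, Real.exp (β' * ⟪w' j, h' z⟫)) :=
    (hnum i).div hden fun z => (hdenpos z).ne'
  have hfracpos : ∀ z : Metric.sphere (0 : EuclideanSpace ℝ (Fin d)) 1,
      0 < Real.exp (β' * ⟪w' i, h' z⟫) / ∑ j : Idx, Real.exp (β' * ⟪w' j, h' z⟫) := fun z =>
    div_pos (Real.exp_pos _) (hdenpos z)
  exact (continuous_exp_inner κ _).mul ((hfrac.log fun z => (hfracpos z).ne').neg)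

lemma continuous_ceIntegrand
    {h' : Metric.sphere (0 : EuclideanSpace ℝ (Fin d)) 1 → EuclideanSpace ℝ (Fin d)}
    {w' : Idx → EuclideanSpace ℝ (Fin d)} {β' : ℝ} (hh' : Continuous h') :
    Continuous (ceIntegrand v κ Cl h' w' β') :=
  continuous_finset_sum _ fun i _ => continuous_ceTerm v κ Cl hh' i

lemma continuous_entIntegrand : Continuous (entIntegrand v κ Cl (Idx := Idx)) := by
  have : entIntegrand v κ Cl (Idx := Idx) =
      ceIntegrand v κ Cl (fun z => (z : EuclideanSpace ℝ (Fin d)))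
        (fun i => κ • v (Cl i)) 1 := by
    funext z
    unfold entIntegrand ceIntegrand
    simp only [one_mul, real_inner_smul_left]
  rw [this]
  exact continuous_ceIntegrand v κ Cl continuous_subtype_val

/-- The loss written as a single integral. -/
lemma dietLossZ_formula (hv_norm : ∀ c, ‖v c‖ = 1) (i₀ : Idx)
    (hC : ∀ i : Idx, (∫ z : Metric.sphere (0 : EuclideanSpace ℝ (Fin d)) 1,
        Real.exp (κ * ⟪v (Cl i), (z : EuclideanSpace ℝ (Fin d))⟫) ∂(sphereUniform d))
      = ∫ z : Metric.sphere (0 : EuclideanSpace ℝ (Fin d)) 1,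
        Real.exp (κ * ⟪v (Cl i₀), (z : EuclideanSpace ℝ (Fin d))⟫) ∂(sphereUniform d))
    {h' : Metric.sphere (0 : EuclideanSpace ℝ (Fin d)) 1 → EuclideanSpace ℝ (Fin d)}
    {w' : Idx → EuclideanSpace ℝ (Fin d)} {β' : ℝ} (hh' : Continuous h') :
    dietLossZ d v κ Cl h' w' β' = (Fintype.card Idx : ℝ)⁻¹ *
      ((∫ z : Metric.sphere (0 : EuclideanSpace ℝ (Fin d)) 1,
        Real.exp (κ * ⟪v (Cl i₀), (z : EuclideanSpace ℝ (Fin d))⟫) ∂(sphereUniform d))⁻¹ *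
       ∫ z : Metric.sphere (0 : EuclideanSpace ℝ (Fin d)) 1,
         ceIntegrand v κ Cl h' w' β' z ∂(sphereUniform d)) := by
  unfold dietLossZ
  congr 1
  simp only [hC]
  rw [← Finset.mul_sum]
  congr 1
  rw [← integral_finset_sum]
  · rfl
  · exact fun i _ => (continuous_ceTerm v κ Cl hh' i).integrable_sphere

lemma sum_softmax_eq_one
    {h' : Metric.sphere (0 : EuclideanSpace ℝ (Fin d)) 1 → EuclideanSpace ℝ (Fin d)}
    {w' : Idx → EuclideanSpace ℝ (Fin d)} {β' : ℝ}
    (z : Metric.sphere (0 : EuclideanSpace ℝ (Fin d)) 1) :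
    ∑ i : Idx, Real.exp (β' * ⟪w' i, h' z⟫) / ∑ j : Idx, Real.exp (β' * ⟪w' j, h' z⟫) = 1 := by
  rw [← Finset.sum_div, div_self]
  exact (Finset.sum_pos (fun j _ => Real.exp_pos _) Finset.univ_nonempty).ne'

lemma entIntegrand_le
    {h' : Metric.sphere (0 : EuclideanSpace ℝ (Fin d)) 1 → EuclideanSpace ℝ (Fin d)}
    {w' : Idx → EuclideanSpace ℝ (Fin d)} {β' : ℝ}
    (z : Metric.sphere (0 : EuclideanSpace ℝ (Fin d)) 1) :
    entIntegrand v κ Cl z ≤ ceIntegrand v κ Cl h' w' β' z := by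
  unfold entIntegrand ceIntegrand
  exact gibbs_le (fun i => Real.exp (κ * ⟪v (Cl i), (z : EuclideanSpace ℝ (Fin d))⟫))
    (fun i => Real.exp (β' * ⟪w' i, h' z⟫) / ∑ j : Idx, Real.exp (β' * ⟪w' j, h' z⟫))
    (fun i => Real.exp_pos _)
    (fun i => div_pos (Real.exp_pos _)
      (Finset.sum_pos (fun j _ => Real.exp_pos _) Finset.univ_nonempty))
    (sum_softmax_eq_one z)

lemma softmax_eq_of_integrand_eq
    {h' : Metric.sphere (0 : EuclideanSpace ℝ (Fin d)) 1 → EuclideanSpace ℝ (Fin d)}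
    {w' : Idx → EuclideanSpace ℝ (Fin d)} {β' : ℝ}
    (z : Metric.sphere (0 : EuclideanSpace ℝ (Fin d)) 1)
    (heq : entIntegrand v κ Cl z = ceIntegrand v κ Cl h' w' β' z) (i : Idx) :
    Real.exp (β' * ⟪w' i, h' z⟫) / ∑ j : Idx, Real.exp (β' * ⟪w' j, h' z⟫)
      = Real.exp (κ * ⟪v (Cl i), (z : EuclideanSpace ℝ (Fin d))⟫) /
        ∑ j : Idx, Real.exp (κ * ⟪v (Cl j), (z : EuclideanSpace ℝ (Fin d))⟫) := by
  refine gibbs_eq (fun i => Real.exp (κ * ⟪v (Cl i), (z : EuclideanSpace ℝ (Fin d))⟫))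
    (fun i => Real.exp (β' * ⟪w' i, h' z⟫) / ∑ j : Idx, Real.exp (β' * ⟪w' j, h' z⟫))
    (fun i => Real.exp_pos _)
    (fun i => div_pos (Real.exp_pos _)
      (Finset.sum_pos (fun j _ => Real.exp_pos _) Finset.univ_nonempty))
    (sum_softmax_eq_one z) ?_ i
  exact heq

lemma lowerBound [Nonempty (Metric.sphere (0 : EuclideanSpace ℝ (Fin d)) 1)]
    (hv_norm : ∀ c, ‖v c‖ = 1) (i₀ : Idx)
    {h' : Metric.sphere (0 : EuclideanSpace ℝ (Fin d)) 1 → EuclideanSpace ℝ (Fin d)}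
    {w' : Idx → EuclideanSpace ℝ (Fin d)} {β' : ℝ} (hh' : Continuous h') :
    (Fintype.card Idx : ℝ)⁻¹ *
      ((∫ z : Metric.sphere (0 : EuclideanSpace ℝ (Fin d)) 1,
        Real.exp (κ * ⟪v (Cl i₀), (z : EuclideanSpace ℝ (Fin d))⟫) ∂(sphereUniform d))⁻¹ *
       ∫ z : Metric.sphere (0 : EuclideanSpace ℝ (Fin d)) 1,
         entIntegrand v κ Cl z ∂(sphereUniform d)) ≤ dietLossZ d v κ Cl h' w' β' := by
  rw [dietLossZ_formula v κ Cl hv_norm i₀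
    (fun i => integral_exp_inner_congr κ _ _ (hv_norm _) (hv_norm _)) hh']
  apply mul_le_mul_of_nonneg_left _ (by positivity)
  apply mul_le_mul_of_nonneg_left _ (inv_nonneg.2 (integral_exp_inner_pos κ _).le)
  exact integral_mono (continuous_entIntegrand v κ Cl).integrable_sphere
    (continuous_ceIntegrand v κ Cl hh').integrable_sphere
    (fun z => entIntegrand_le v κ Cl z)

lemma loss_eq_of_softmax_eq [Nonempty (Metric.sphere (0 : EuclideanSpace ℝ (Fin d)) 1)]
    (hv_norm : ∀ c, ‖v c‖ = 1) (i₀ : Idx)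
    {h' : Metric.sphere (0 : EuclideanSpace ℝ (Fin d)) 1 → EuclideanSpace ℝ (Fin d)}
    {w' : Idx → EuclideanSpace ℝ (Fin d)} {β' : ℝ} (hh' : Continuous h')
    (hq : ∀ (i : Idx) (z : Metric.sphere (0 : EuclideanSpace ℝ (Fin d)) 1),
      Real.exp (β' * ⟪w' i, h' z⟫) / ∑ j : Idx, Real.exp (β' * ⟪w' j, h' z⟫)
        = Real.exp (κ * ⟪v (Cl i), (z : EuclideanSpace ℝ (Fin d))⟫) /
          ∑ j : Idx, Real.exp (κ * ⟪v (Cl j), (z : EuclideanSpace ℝ (Fin d))⟫)) :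
    dietLossZ d v κ Cl h' w' β' = (Fintype.card Idx : ℝ)⁻¹ *
      ((∫ z : Metric.sphere (0 : EuclideanSpace ℝ (Fin d)) 1,
        Real.exp (κ * ⟪v (Cl i₀), (z : EuclideanSpace ℝ (Fin d))⟫) ∂(sphereUniform d))⁻¹ *
       ∫ z : Metric.sphere (0 : EuclideanSpace ℝ (Fin d)) 1,
         entIntegrand v κ Cl z ∂(sphereUniform d)) := by
  rw [dietLossZ_formula v κ Cl hv_norm i₀
    (fun i => integral_exp_inner_congr κ _ _ (hv_norm _) (hv_norm _)) hh']
  congr 2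
  apply integral_congr_ae
  filter_upwards with z
  unfold ceIntegrand entIntegrand
  refine Finset.sum_congr rfl fun i _ => ?_
  rw [hq i z]

lemma softmax_eq_of_loss_eq [Nonempty (Metric.sphere (0 : EuclideanSpace ℝ (Fin d)) 1)]
    (hv_norm : ∀ c, ‖v c‖ = 1) (i₀ : Idx)
    {h' : Metric.sphere (0 : EuclideanSpace ℝ (Fin d)) 1 → EuclideanSpace ℝ (Fin d)}
    {w' : Idx → EuclideanSpace ℝ (Fin d)} {β' : ℝ} (hh' : Continuous h')
    (hloss : dietLossZ d v κ Cl h' w' β' = (Fintype.card Idx : ℝ)⁻¹ *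
      ((∫ z : Metric.sphere (0 : EuclideanSpace ℝ (Fin d)) 1,
        Real.exp (κ * ⟪v (Cl i₀), (z : EuclideanSpace ℝ (Fin d))⟫) ∂(sphereUniform d))⁻¹ *
       ∫ z : Metric.sphere (0 : EuclideanSpace ℝ (Fin d)) 1,
         entIntegrand v κ Cl z ∂(sphereUniform d))) :
    ∀ (i : Idx) (z : Metric.sphere (0 : EuclideanSpace ℝ (Fin d)) 1),
      Real.exp (β' * ⟪w' i, h' z⟫) / ∑ j : Idx, Real.exp (β' * ⟪w' j, h' z⟫)
        = Real.exp (κ * ⟪v (Cl i), (z : EuclideanSpace ℝ (Fin d))⟫) /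
          ∑ j : Idx, Real.exp (κ * ⟪v (Cl j), (z : EuclideanSpace ℝ (Fin d))⟫) := by
  rw [dietLossZ_formula v κ Cl hv_norm i₀
    (fun i => integral_exp_inner_congr κ _ _ (hv_norm _) (hv_norm _)) hh'] at hloss
  have hcard : ((Fintype.card Idx : ℝ))⁻¹ ≠ 0 :=
    inv_ne_zero (Nat.cast_ne_zero.2 Fintype.card_ne_zero)
  have hCpos := integral_exp_inner_pos (d := d) κ (v (Cl i₀))
  have h2 : ∫ z : Metric.sphere (0 : EuclideanSpace ℝ (Fin d)) 1,
      ceIntegrand v κ Cl h' w' β' z ∂(sphereUniform d)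
      = ∫ z : Metric.sphere (0 : EuclideanSpace ℝ (Fin d)) 1,
        entIntegrand v κ Cl z ∂(sphereUniform d) := by
    have := mul_left_cancel₀ hcard hloss
    exact mul_left_cancel₀ (inv_ne_zero hCpos.ne') this
  have hint1 := (continuous_ceIntegrand v κ Cl hh' (w' := w') (β' := β')).integrable_sphere
  have hint2 := (continuous_entIntegrand v κ Cl (Idx := Idx)).integrable_sphere
  have h3 : ∫ z : Metric.sphere (0 : EuclideanSpace ℝ (Fin d)) 1,
      (ceIntegrand v κ Cl h' w' β' z - entIntegrand v κ Cl z) ∂(sphereUniform d) = 0 := by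
    rw [integral_sub hint1 hint2, h2, sub_self]
  have h4 := (integral_eq_zero_iff_of_nonneg
    (fun z => sub_nonneg.2 (entIntegrand_le v κ Cl z)) (hint1.sub hint2)).1 h3
  haveI := sphereUniform_isOpenPosMeasure d
  have h5 : (fun z => ceIntegrand v κ Cl h' w' β' z - entIntegrand v κ Cl z)
      = (fun _ => (0 : ℝ)) := by
    refine (Continuous.ae_eq_iff_eq (sphereUniform d) ?_ continuous_const).1 h4
    exact (continuous_ceIntegrand v κ Cl hh').sub (continuous_entIntegrand v κ Cl)
  intro i z
  have h6 : entIntegrand v κ Cl z = ceIntegrand v κ Cl h' w' β' z := by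
    have := congrFun h5 z
    simp only [sub_eq_zero] at this
    exact this.symm
  exact softmax_eq_of_integrand_eq v κ Cl z h6 i

end Aux

/-- **Characterization of global minimizers of the latent DIET objective.** A triple
`(h, W, β)` with `h` continuous and `β > 0` globally minimizes the latent DIET objective
if and only if `β ⟨w i − w k, h z⟩ = κ ⟨v_{𝒞(i)} − v_{𝒞(k)}, z⟩` for all instance labels
`i, k` and all `z` on the unit sphere. -/
theorem dietLossZ_isMinOn_iff
    {d : ℕ} {Cset Idx : Type} [Fintype Cset] [Fintype Idx]
    (v : Cset → EuclideanSpace ℝ (Fin d))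
    (hv_norm : ∀ c, ‖v c‖ = 1)
    (hv_gen : IsAffineGenerator v)
    (Cl : Idx → Cset) (hCl : Function.Surjective Cl)
    (κ : ℝ) (hκ : 0 < κ)
    (h : Metric.sphere (0 : EuclideanSpace ℝ (Fin d)) 1 → EuclideanSpace ℝ (Fin d))
    (w : Idx → EuclideanSpace ℝ (Fin d)) (β : ℝ)
    (hh_cont : Continuous h)
    (hβ : 0 < β) :
    (∀ (h' : Metric.sphere (0 : EuclideanSpace ℝ (Fin d)) 1 → EuclideanSpace ℝ (Fin d))
      (w' : Idx → EuclideanSpace ℝ (Fin d)) (β' : ℝ), Continuous h' → 0 < β' →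
      dietLossZ d v κ Cl h w β ≤ dietLossZ d v κ Cl h' w' β') ↔
    (∀ i k : Idx, ∀ z : Metric.sphere (0 : EuclideanSpace ℝ (Fin d)) 1,
      β * ⟪w i - w k, h z⟫ = κ * ⟪v (Cl i) - v (Cl k), (z : EuclideanSpace ℝ (Fin d))⟫) := by
  haveI hIdx : Nonempty Idx := by
    rcases isEmpty_or_nonempty Idx with hI | hI
    · rcases isEmpty_or_nonempty Cset with hC' | hC'
      · obtain ⟨α, hα, -⟩ := hv_gen 0
        simp [Finset.univ_eq_empty] at hα
      · obtain ⟨i, -⟩ := hCl (Classical.arbitrary Cset)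
        exact (hI.false i).elim
    · exact hI
  rcases isEmpty_or_nonempty (Metric.sphere (0 : EuclideanSpace ℝ (Fin d)) 1) with hS | hS
  · have hzero : ∀ (h'' : Metric.sphere (0 : EuclideanSpace ℝ (Fin d)) 1 →
        EuclideanSpace ℝ (Fin d)) (w'' : Idx → EuclideanSpace ℝ (Fin d)) (β'' : ℝ),
        dietLossZ d v κ Cl h'' w'' β'' = 0 := by
      intro h'' w'' β''
      unfold dietLossZ
      rw [Measure.eq_zero_of_isEmpty (sphereUniform d)]
      simp
    constructor
    · intro _ i k z; exact isEmptyElim z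
    · intro _ h' w' β' _ _; rw [hzero, hzero]
  · set i₀ : Idx := Classical.arbitrary Idx with hi₀
    have hcan : dietLossZ d v κ Cl (fun z => (z : EuclideanSpace ℝ (Fin d)))
        (fun i => κ • v (Cl i)) 1 = (Fintype.card Idx : ℝ)⁻¹ *
      ((∫ z : Metric.sphere (0 : EuclideanSpace ℝ (Fin d)) 1,
        Real.exp (κ * ⟪v (Cl i₀), (z : EuclideanSpace ℝ (Fin d))⟫) ∂(sphereUniform d))⁻¹ *
       ∫ z : Metric.sphere (0 : EuclideanSpace ℝ (Fin d)) 1,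
         entIntegrand v κ Cl z ∂(sphereUniform d)) := by
      apply loss_eq_of_softmax_eq v κ Cl hv_norm i₀ continuous_subtype_val
      intro i z
      simp only [one_mul, real_inner_smul_left]
    constructor
    · intro hmin i k z
      have hval := lowerBound v κ Cl hv_norm i₀ (h' := h) (w' := w) (β' := β) hh_cont
      have h1 := hmin (fun z => (z : EuclideanSpace ℝ (Fin d))) (fun i => κ • v (Cl i)) 1
        continuous_subtype_val one_pos
      rw [hcan] at h1
      have heq := le_antisymm h1 hval
      have hq := softmax_eq_of_loss_eq v κ Cl hv_norm i₀ hh_cont heq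
      have hi := hq i z
      have hk := hq k z
      have hA : 0 < ∑ j : Idx, Real.exp (κ * ⟪v (Cl j), (z : EuclideanSpace ℝ (Fin d))⟫) :=
        Finset.sum_pos (fun j _ => Real.exp_pos _) Finset.univ_nonempty
      have hD : 0 < ∑ j : Idx, Real.exp (β * ⟪w j, h z⟫) :=
        Finset.sum_pos (fun j _ => Real.exp_pos _) Finset.univ_nonempty
      have hi' := (div_eq_div_iff hD.ne' hA.ne').1 hi
      have hk' := (div_eq_div_iff hD.ne' hA.ne').1 hk
      have key : Real.exp (β * ⟪w i, h z⟫) *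
            Real.exp (κ * ⟪v (Cl k), (z : EuclideanSpace ℝ (Fin d))⟫)
          = Real.exp (β * ⟪w k, h z⟫) *
            Real.exp (κ * ⟪v (Cl i), (z : EuclideanSpace ℝ (Fin d))⟫) := by
        apply mul_right_cancel₀ hA.ne'
        linear_combination Real.exp (κ * ⟪v (Cl k), (z : EuclideanSpace ℝ (Fin d))⟫) * hi'
          - Real.exp (κ * ⟪v (Cl i), (z : EuclideanSpace ℝ (Fin d))⟫) * hk'
      rw [← Real.exp_add, ← Real.exp_add] at key
      have hlin := Real.exp_eq_exp.1 key
      rw [inner_sub_left, inner_sub_left]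
      ring_nf
      ring_nf at hlin
      linarith
    · intro hrel h' w' β' hh' hβ'
      have hq : ∀ (i : Idx) (z : Metric.sphere (0 : EuclideanSpace ℝ (Fin d)) 1),
          Real.exp (β * ⟪w i, h z⟫) / ∑ j : Idx, Real.exp (β * ⟪w j, h z⟫)
            = Real.exp (κ * ⟪v (Cl i), (z : EuclideanSpace ℝ (Fin d))⟫) /
              ∑ j : Idx, Real.exp (κ * ⟪v (Cl j), (z : EuclideanSpace ℝ (Fin d))⟫) := by
        intro i z
        have hden : (∑ j : Idx, Real.exp (β * ⟪w j, h z⟫))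
            = Real.exp (β * ⟪w i, h z⟫ - κ * ⟪v (Cl i), (z : EuclideanSpace ℝ (Fin d))⟫) *
              ∑ j : Idx, Real.exp (κ * ⟪v (Cl j), (z : EuclideanSpace ℝ (Fin d))⟫) := by
          rw [Finset.mul_sum]
          refine Finset.sum_congr rfl fun j _ => ?_
          rw [← Real.exp_add]
          congr 1
          have hij := hrel i j z
          rw [inner_sub_left, inner_sub_left] at hij
          ring_nf
          ring_nf at hij
          linarith
        have hnum : Real.exp (β * ⟪w i, h z⟫)
            = Real.exp (β * ⟪w i, h z⟫ - κ * ⟪v (Cl i), (z : EuclideanSpace ℝ (Fin d))⟫) *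
              Real.exp (κ * ⟪v (Cl i), (z : EuclideanSpace ℝ (Fin d))⟫) := by
          rw [← Real.exp_add]
          congr 1
          ring
        rw [hden, hnum, mul_div_mul_left _ _ (Real.exp_ne_zero _)]
      calc dietLossZ d v κ Cl h w β
          = (Fintype.card Idx : ℝ)⁻¹ *
            ((∫ z : Metric.sphere (0 : EuclideanSpace ℝ (Fin d)) 1,
              Real.exp (κ * ⟪v (Cl i₀), (z : EuclideanSpace ℝ (Fin d))⟫) ∂(sphereUniform d))⁻¹ *
            ∫ z : Metric.sphere (0 : EuclideanSpace ℝ (Fin d)) 1,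
              entIntegrand v κ Cl z ∂(sphereUniform d)) :=
            loss_eq_of_softmax_eq v κ Cl hv_norm i₀ hh_cont hq
        _ ≤ dietLossZ d v κ Cl h' w' β' := lowerBound v κ Cl hv_norm i₀ hh'
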